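/- Closed-form representation of the numerical scheme Ξ^{[3]} (Remark 3.4 of the paper). Let ψ₀, ψ'₀, ψ''₀ ∈ E be given and define recursively: ψ₁ := cos(hG) ψ₀ + G⁻¹ sin(hG) ψ'₀ + ∫₀ʰ G⁻¹ sin((h−τ)G) (m(t₀+τ)(ψ₀ + τ ψ'₀ + (τ²/2) ψ''₀)) dτ, ψ'₁ := −G sin(hG) ψ₀ + cos(hG) ψ'₀ + ∫₀ʰ cos((h−τ)G) (m(t₀+τ)(ψ₀ + τ ψ'₀ + (τ²/2) ψ''₀)) dτ, and for 1 ≤ k ≤ K−1: ψ_{k+1} := cos(hG) ψ_k + G⁻¹ sin(hG) ψ'_k + ∫₀ʰ G⁻¹ sin((h−τ)G) (m(t_k+τ)(ψ_k + τ ψ'_k + (τ²/(2h))(ψ'_k − ψ'_{k−1}))) dτ, ψ'_{k+1} := −G sin(hG) ψ_k + cos(hG) ψ'_k + ∫₀ʰ cos((h−τ)G) (m(t_k+τ)(ψ_k + τ ψ'_k + (τ²/(2h))(ψ'_k − ψ'_{k−1}))) dτ. Then for every 2 ≤ k ≤ K: ψ_k = cos(khG) ψ₀ + G⁻¹ sin(khG)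 ψ'₀ + ∫₀ʰ G⁻¹ sin((kh−τ)G)(m(t₀+τ)(ψ₀ + τψ'₀ + (τ²/2)ψ''₀)) dτ + Σ_{l=1}^{k−1} ∫₀ʰ G⁻¹ sin(((k−l)h−τ)G)(m(t_l+τ)(ψ_l + τψ'_l + (τ²/(2h))(ψ'_l − ψ'_{l−1}))) dτ, and ψ'_k = −G sin(khG) ψ₀ + cos(khG) ψ'₀ + ∫₀ʰ cos((kh−τ)G)(m(t₀+τ)(ψ₀ + τψ'₀ + (τ²/2)ψ''₀)) dτ + Σ_{l=1}^{k−1} ∫₀ʰ cos(((k−l)h−τ)G)(m(t_l+τ)(ψ_l + τψ'_l + (τ²/(2h))(ψ'_l − ψ'_{l−1}))) dτ. -/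

import Mathlib

/-- `cos(tG) := (exp(itG) + exp(−itG))/2` in a complex unital Banach algebra. -/
noncomputable def opCos {A : Type*} [NormedRing A] [NormedAlgebra ℂ A] (t : ℝ) (G : A) : A :=
  (2 : ℂ)⁻¹ • (NormedSpace.exp (((t : ℂ) * Complex.I) • G) +
    NormedSpace.exp ((-(t : ℂ) * Complex.I) • G))

/-- `sin(tG) := (exp(itG) − exp(−itG))/(2i)` in a complex unital Banach algebra. -/
noncomputable def opSin {A : Type*} [NormedRing A] [NormedAlgebra ℂ A] (t : ℝ) (G : A) : A :=
  (2 * Complex.I)⁻¹ • (NormedSpace.exp (((t : ℂ) * Complex.I) • G) -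
    NormedSpace.exp ((-(t : ℂ) * Complex.I) • G))

open NormedSpace

section opalg
variable {A : Type*} [NormedRing A] [NormedAlgebra ℂ A] [CompleteSpace A]

lemma expc_mul (G : A) (c d : ℂ) :
    exp (c • G) * exp (d • G) = exp ((c + d) • G) := by
  let +nondep : NormedAlgebra ℚ A := .restrictScalars ℚ ℂ A
  rw [add_smul, exp_add_of_commute (((Commute.refl G).smul_left c).smul_right d)]

lemma opCos_add (G : A) (a b : ℝ) :
    opCos (a + b) G = opCos a G * opCos b G - opSin a G * opSin b G := by
  simp only [opCos, opSin, Complex.ofReal_add, smul_mul_smul_comm, add_mul, mul_add,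
    sub_mul, mul_sub, expc_mul]
  ring_nf
  match_scalars <;> norm_num [Complex.ext_iff]

lemma opSin_add (G : A) (a b : ℝ) :
    opSin (a + b) G = opSin a G * opCos b G + opCos a G * opSin b G := by
  simp only [opCos, opSin, Complex.ofReal_add, smul_mul_smul_comm, add_mul, mul_add,
    sub_mul, mul_sub, expc_mul]
  ring_nf
  match_scalars <;> norm_num [Complex.ext_iff]

lemma commute_opCos (t : ℝ) {x G : A} (hx : Commute x G) : Commute x (opCos t G) :=
  (((hx.smul_right _).exp_right).add_right ((hx.smul_right _).exp_right)).smul_right _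

lemma commute_opSin (t : ℝ) {x G : A} (hx : Commute x G) : Commute x (opSin t G) :=
  (((hx.smul_right _).exp_right).sub_right ((hx.smul_right _).exp_right)).smul_right _

lemma continuous_opCos (G : A) : Continuous fun t : ℝ => opCos t G := by
  apply Continuous.const_smul
  let +nondep : NormedAlgebra ℚ A := .restrictScalars ℚ ℂ A
  exact ((exp_continuous (𝔸 := A)).comp (((Complex.continuous_ofReal.mul continuous_const)).smul
    continuous_const)).add ((exp_continuous (𝔸 := A)).comp
    ((((Complex.continuous_ofReal.neg).mul continuous_const)).smul continuous_const))

lemma continuous_opSin (G : A) : Continuous fun t : ℝ => opSin t G := by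
  apply Continuous.const_smul
  let +nondep : NormedAlgebra ℚ A := .restrictScalars ℚ ℂ A
  exact ((exp_continuous (𝔸 := A)).comp (((Complex.continuous_ofReal.mul continuous_const)).smul
    continuous_const)).sub ((exp_continuous (𝔸 := A)).comp
    ((((Complex.continuous_ofReal.neg).mul continuous_const)).smul continuous_const))

end opalg

section vec
variable {E : Type*} [NormedAddCommGroup E] [NormedSpace ℂ E] [CompleteSpace E]
variable (G Ginv : E →L[ℂ] E)

lemma commGinv (hGr : G * Ginv = 1) (hGl : Ginv * G = 1) : Commute Ginv G := by
  unfold Commute SemiconjBy; rw [hGl, hGr]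

lemma vec1 (hGr : G * Ginv = 1) (hGl : Ginv * G = 1) (a x y : ℝ) (hy : y = a + x) (v : E) :
    opCos a G (Ginv (opSin x G v)) + Ginv (opSin a G (opCos x G v)) = Ginv (opSin y G v) := by
  subst hy
  have hc := commGinv G Ginv hGr hGl
  have key : opCos a G * (Ginv * opSin x G) + Ginv * (opSin a G * opCos x G)
      = Ginv * opSin (a + x) G := by
    rw [opSin_add, ← mul_assoc, ← (commute_opCos a hc).eq, mul_assoc, ← mul_add,
      add_comm (opCos a G * opSin x G)]
  simpa [ContinuousLinearMap.mul_apply, ContinuousLinearMap.add_apply] using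
    congrArg (fun T : E →L[ℂ] E => T v) key

lemma vec2 (hGr : G * Ginv = 1) (hGl : Ginv * G = 1) (a x y : ℝ) (hy : y = a + x) (v : E) :
    opCos a G (opCos x G v) - G (opSin a G (Ginv (opSin x G v))) = opCos y G v := by
  subst hy
  have hc := commGinv G Ginv hGr hGl
  have h1 : G * (opSin a G * (Ginv * opSin x G)) = opSin a G * opSin x G := by
    calc G * (opSin a G * (Ginv * opSin x G))
        = G * ((opSin a G * Ginv) * opSin x G) := by rw [mul_assoc]
      _ = G * ((Ginv * opSin a G) * opSin x G) := by rw [(commute_opSin a hc).eq]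
      _ = ((G * Ginv) * opSin a G) * opSin x G := by rw [← mul_assoc, ← mul_assoc]
      _ = opSin a G * opSin x G := by rw [hGr, one_mul]
  have key : opCos a G * opCos x G - G * (opSin a G * (Ginv * opSin x G))
      = opCos (a + x) G := by rw [h1, opCos_add]
  simpa [ContinuousLinearMap.mul_apply, ContinuousLinearMap.sub_apply] using
    congrArg (fun T : E →L[ℂ] E => T v) key

lemma vec3 (hGr : G * Ginv = 1) (hGl : Ginv * G = 1) (a x y : ℝ) (hy : y = a + x) (v : E) :
    opCos a G (opCos x G v) - Ginv (opSin a G (G (opSin x G v))) = opCos y G v := by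
  subst hy
  have hc := commGinv G Ginv hGr hGl
  have h1 : Ginv * (opSin a G * (G * opSin x G)) = opSin a G * opSin x G := by
    calc Ginv * (opSin a G * (G * opSin x G))
        = Ginv * ((opSin a G * G) * opSin x G) := by rw [mul_assoc]
      _ = Ginv * ((G * opSin a G) * opSin x G) := by
          rw [(commute_opSin a (Commute.refl G)).eq]
      _ = ((Ginv * G) * opSin a G) * opSin x G := by rw [← mul_assoc, ← mul_assoc]
      _ = opSin a G * opSin x G := by rw [hGl, one_mul]
  have key : opCos a G * opCos x G - Ginv * (opSin a G * (G * opSin x G))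
      = opCos (a + x) G := by rw [h1, opCos_add]
  simpa [ContinuousLinearMap.mul_apply, ContinuousLinearMap.sub_apply] using
    congrArg (fun T : E →L[ℂ] E => T v) key

lemma vec4 (a x y : ℝ) (hy : y = a + x) (v : E) :
    G (opSin a G (opCos x G v)) + opCos a G (G (opSin x G v)) = G (opSin y G v) := by
  subst hy
  have key : G * (opSin a G * opCos x G) + opCos a G * (G * opSin x G)
      = G * opSin (a + x) G := by
    rw [opSin_add, ← mul_assoc (opCos a G), ← (commute_opCos a (Commute.refl G)).eq,
      mul_assoc, ← mul_add]
  simpa [ContinuousLinearMap.mul_apply, ContinuousLinearMap.add_apply] using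
    congrArg (fun T : E →L[ℂ] E => T v) key

end vec

section pairs
variable {E : Type*} [NormedAddCommGroup E] [NormedSpace ℂ E] [CompleteSpace E]
variable (G Ginv : E →L[ℂ] E)

lemma pairIntA (hGr : G * Ginv = 1) (hGl : Ginv * G = 1) (h b y : ℝ) (hy : y = h + b)
    (φ : ℝ → E) (hφ : Continuous φ) :
    opCos h G (∫ τ in (0:ℝ)..h, Ginv (opSin (b - τ) G (φ τ))) +
      Ginv (opSin h G (∫ τ in (0:ℝ)..h, opCos (b - τ) G (φ τ))) =
    ∫ τ in (0:ℝ)..h, Ginv (opSin (y - τ) G (φ τ)) := by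
  have c1 : Continuous fun τ : ℝ => Ginv (opSin (b - τ) G (φ τ)) :=
    Ginv.continuous.comp
      (((continuous_opSin G).comp (continuous_const.sub continuous_id)).clm_apply hφ)
  have c2 : Continuous fun τ : ℝ => opCos (b - τ) G (φ τ) :=
    ((continuous_opCos G).comp (continuous_const.sub continuous_id)).clm_apply hφ
  have c3 : Continuous fun τ : ℝ => opSin h G (opCos (b - τ) G (φ τ)) :=
    (opSin h G).continuous.comp c2
  have c4 : Continuous fun τ : ℝ => opCos h G (Ginv (opSin (b - τ) G (φ τ))) :=
    (opCos h G).continuous.comp c1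
  have c5 : Continuous fun τ : ℝ => Ginv (opSin h G (opCos (b - τ) G (φ τ))) :=
    Ginv.continuous.comp c3
  rw [← ContinuousLinearMap.intervalIntegral_comp_comm (opCos h G) (c1.intervalIntegrable 0 h),
    ← ContinuousLinearMap.intervalIntegral_comp_comm (opSin h G) (c2.intervalIntegrable 0 h),
    ← ContinuousLinearMap.intervalIntegral_comp_comm Ginv (c3.intervalIntegrable 0 h),
    ← intervalIntegral.integral_add (c4.intervalIntegrable 0 h) (c5.intervalIntegrable 0 h)]
  exact intervalIntegral.integral_congr fun τ _ =>
    vec1 G Ginv hGr hGl h (b - τ) (y - τ) (by rw [hy]; ring) (φ τ)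

lemma pairIntB (hGr : G * Ginv = 1) (hGl : Ginv * G = 1) (h b y : ℝ) (hy : y = h + b)
    (φ : ℝ → E) (hφ : Continuous φ) :
    -(G (opSin h G (∫ τ in (0:ℝ)..h, Ginv (opSin (b - τ) G (φ τ))))) +
      opCos h G (∫ τ in (0:ℝ)..h, opCos (b - τ) G (φ τ)) =
    ∫ τ in (0:ℝ)..h, opCos (y - τ) G (φ τ) := by
  have c1 : Continuous fun τ : ℝ => Ginv (opSin (b - τ) G (φ τ)) :=
    Ginv.continuous.comp
      (((continuous_opSin G).comp (continuous_const.sub continuous_id)).clm_apply hφ)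
  have c2 : Continuous fun τ : ℝ => opCos (b - τ) G (φ τ) :=
    ((continuous_opCos G).comp (continuous_const.sub continuous_id)).clm_apply hφ
  have c3 : Continuous fun τ : ℝ => opSin h G (Ginv (opSin (b - τ) G (φ τ))) :=
    (opSin h G).continuous.comp c1
  have c4 : Continuous fun τ : ℝ => opCos h G (opCos (b - τ) G (φ τ)) :=
    (opCos h G).continuous.comp c2
  have c5 : Continuous fun τ : ℝ => G (opSin h G (Ginv (opSin (b - τ) G (φ τ)))) :=
    G.continuous.comp c3
  rw [← ContinuousLinearMap.intervalIntegral_comp_comm (opSin h G) (c1.intervalIntegrable 0 h),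
    ← ContinuousLinearMap.intervalIntegral_comp_comm G (c3.intervalIntegrable 0 h),
    ← ContinuousLinearMap.intervalIntegral_comp_comm (opCos h G) (c2.intervalIntegrable 0 h),
    neg_add_eq_sub,
    ← intervalIntegral.integral_sub (c4.intervalIntegrable 0 h) (c5.intervalIntegrable 0 h)]
  exact intervalIntegral.integral_congr fun τ _ =>
    vec2 G Ginv hGr hGl h (b - τ) (y - τ) (by rw [hy]; ring) (φ τ)

end pairs

section aux
variable {E : Type*} [NormedAddCommGroup E] [NormedSpace ℂ E] [CompleteSpace E]

lemma aux_closed_form (G Ginv : E →L[ℂ] E) (hGr : G * Ginv = 1) (hGl : Ginv * G = 1)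
    (h : ℝ) (w : ℕ → ℝ → E) (hw : ∀ l, Continuous (w l)) (p p' : E)
    (Φ Φ' : ℕ → E) (K : ℕ)
    (h1 : Φ 1 = opCos h G p + Ginv (opSin h G p') +
      ∫ τ in (0:ℝ)..h, Ginv (opSin (h - τ) G (w 0 τ)))
    (h1' : Φ' 1 = -(G (opSin h G p)) + opCos h G p' +
      ∫ τ in (0:ℝ)..h, opCos (h - τ) G (w 0 τ))
    (hstep : ∀ k : ℕ, 1 ≤ k → k ≤ K - 1 →
      Φ (k + 1) = opCos h G (Φ k) + Ginv (opSin h G (Φ' k)) +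
        ∫ τ in (0:ℝ)..h, Ginv (opSin (h - τ) G (w k τ)))
    (hstep' : ∀ k : ℕ, 1 ≤ k → k ≤ K - 1 →
      Φ' (k + 1) = -(G (opSin h G (Φ k))) + opCos h G (Φ' k) +
        ∫ τ in (0:ℝ)..h, opCos (h - τ) G (w k τ)) :
    ∀ k : ℕ, 1 ≤ k → k ≤ K →
      (Φ k = opCos (k * h) G p + Ginv (opSin (k * h) G p') +
        (∫ τ in (0:ℝ)..h, Ginv (opSin ((k : ℝ) * h - τ) G (w 0 τ))) +
        ∑ l ∈ Finset.Icc 1 (k - 1),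
          ∫ τ in (0:ℝ)..h, Ginv (opSin (((k : ℝ) - l) * h - τ) G (w l τ))) ∧
      (Φ' k = -(G (opSin (k * h) G p)) + opCos (k * h) G p' +
        (∫ τ in (0:ℝ)..h, opCos ((k : ℝ) * h - τ) G (w 0 τ)) +
        ∑ l ∈ Finset.Icc 1 (k - 1),
          ∫ τ in (0:ℝ)..h, opCos (((k : ℝ) - l) * h - τ) G (w l τ)) := by
  intro k hk1
  induction k, hk1 using Nat.le_induction with
  | base =>
    intro hK
    have he : Finset.Icc 1 0 = (∅ : Finset ℕ) := rfl
    constructor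
    · rw [h1]; push_cast; simp [he]
    · rw [h1']; push_cast; simp [he]
  | succ k hk ihk =>
    intro hkK
    obtain ⟨e1, e2⟩ := ihk (by omega)
    have hsum : ∀ g : ℕ → E,
        ∑ l ∈ Finset.Icc 1 k, g l = (∑ l ∈ Finset.Icc 1 (k - 1), g l) + g k := by
      intro g
      have hkk : k - 1 + 1 = k := by omega
      rw [← hkk, Finset.sum_Icc_succ_top (by omega)]
      simp [Nat.add_sub_cancel]
    -- paired sums
    have hS1 : opCos h G (∑ l ∈ Finset.Icc 1 (k - 1),
          ∫ τ in (0:ℝ)..h, Ginv (opSin (((k : ℝ) - l) * h - τ) G (w l τ))) +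
        Ginv (opSin h G (∑ l ∈ Finset.Icc 1 (k - 1),
          ∫ τ in (0:ℝ)..h, opCos (((k : ℝ) - l) * h - τ) G (w l τ))) =
        ∑ l ∈ Finset.Icc 1 (k - 1),
          ∫ τ in (0:ℝ)..h, Ginv (opSin (((k : ℝ) + 1 - l) * h - τ) G (w l τ)) := by
      simp only [map_sum, ← Finset.sum_add_distrib]
      exact Finset.sum_congr rfl fun l _ =>
        pairIntA G Ginv hGr hGl h _ _ (by ring) (w l) (hw l)
    have hS2 : -(G (opSin h G (∑ l ∈ Finset.Icc 1 (k - 1),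
          ∫ τ in (0:ℝ)..h, Ginv (opSin (((k : ℝ) - l) * h - τ) G (w l τ))))) +
        opCos h G (∑ l ∈ Finset.Icc 1 (k - 1),
          ∫ τ in (0:ℝ)..h, opCos (((k : ℝ) - l) * h - τ) G (w l τ)) =
        ∑ l ∈ Finset.Icc 1 (k - 1),
          ∫ τ in (0:ℝ)..h, opCos (((k : ℝ) + 1 - l) * h - τ) G (w l τ) := by
      simp only [map_sum]
      rw [neg_add_eq_sub, ← Finset.sum_sub_distrib]
      refine Finset.sum_congr rfl fun l _ => ?_
      rw [sub_eq_neg_add]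
      exact pairIntB G Ginv hGr hGl h _ _ (by ring) (w l) (hw l)
    have hI1 := pairIntA G Ginv hGr hGl h ((k : ℝ) * h) (((k : ℝ) + 1) * h)
      (by ring) (w 0) (hw 0)
    have hI2 := pairIntB G Ginv hGr hGl h ((k : ℝ) * h) (((k : ℝ) + 1) * h)
      (by ring) (w 0) (hw 0)
    have hT1 := vec3 G Ginv hGr hGl h ((k : ℝ) * h) (((k : ℝ) + 1) * h) (by ring) p
    have hT2 := vec1 G Ginv hGr hGl h ((k : ℝ) * h) (((k : ℝ) + 1) * h) (by ring) p'
    have hT3 := vec4 G h ((k : ℝ) * h) (((k : ℝ) + 1) * h) (by ring) p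
    have hT4 := vec2 G Ginv hGr hGl h ((k : ℝ) * h) (((k : ℝ) + 1) * h) (by ring) p'
    have hGK1 : (∫ τ in (0:ℝ)..h, Ginv (opSin (((k : ℝ) + 1 - k) * h - τ) G (w k τ))) =
        ∫ τ in (0:ℝ)..h, Ginv (opSin (h - τ) G (w k τ)) :=
      intervalIntegral.integral_congr fun τ _ => by
        rw [show ((k : ℝ) + 1 - k) * h - τ = h - τ by ring]
    have hGK2 : (∫ τ in (0:ℝ)..h, opCos (((k : ℝ) + 1 - k) * h - τ) G (w k τ)) =
        ∫ τ in (0:ℝ)..h, opCos (((k : ℝ) + 1 - k) * h - τ) G (w k τ) := rfl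
    have hGK2' : (∫ τ in (0:ℝ)..h, opCos (((k : ℝ) + 1 - k) * h - τ) G (w k τ)) =
        ∫ τ in (0:ℝ)..h, opCos (h - τ) G (w k τ) :=
      intervalIntegral.integral_congr fun τ _ => by
        rw [show ((k : ℝ) + 1 - k) * h - τ = h - τ by ring]
    constructor
    · rw [hstep k hk (by omega), e1, e2]
      simp only [map_add, map_neg]
      push_cast
      rw [hsum (fun l => ∫ τ in (0:ℝ)..h,
        Ginv (opSin (((k : ℝ) + 1 - l) * h - τ) G (w l τ)))]
      rw [hGK1, ← hS1, ← hI1, ← hT1, ← hT2]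
      abel
    · rw [hstep' k hk (by omega), e1, e2]
      simp only [map_add, map_neg]
      push_cast
      rw [hsum (fun l => ∫ τ in (0:ℝ)..h,
        opCos (((k : ℝ) + 1 - l) * h - τ) G (w l τ))]
      rw [hGK2', ← hS2, ← hI2, ← hT3, ← hT4]
      abel

end aux

/-- **Remark 3.4, closed form of the scheme Ξ³.**
Let `Ψ k`, `Ψ' k` be the numerical scheme generated from the data `ψ₀, ψ'₀, ψ''₀` by the
recursion of Table 1.  Then for every `2 ≤ k ≤ K` the closed-form representation holds. -/
theorem scheme_closed_form
    {E : Type*} [NormedAddCommGroup E] [NormedSpace ℂ E] [CompleteSpace E]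
    (G Ginv : E →L[ℂ] E) (hGr : G * Ginv = 1) (hGl : Ginv * G = 1)
    (t₀ h : ℝ) (hh : 0 < h) (K : ℕ) (hK : 1 ≤ K)
    (m : ℝ → (E →L[ℂ] E)) (hm : Continuous m)
    (ψ₀ ψ'₀ ψ''₀ : E) (Ψ Ψ' : ℕ → E)
    (hΨ0 : Ψ 0 = ψ₀) (hΨ'0 : Ψ' 0 = ψ'₀)
    (hΨ1 : Ψ 1 = opCos h G ψ₀ + Ginv (opSin h G ψ'₀) +
      ∫ τ in (0:ℝ)..h,
        Ginv (opSin (h - τ) G (m (t₀ + τ) (ψ₀ + τ • ψ'₀ + (τ ^ 2 / 2) • ψ''₀))))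
    (hΨ'1 : Ψ' 1 = -(G (opSin h G ψ₀)) + opCos h G ψ'₀ +
      ∫ τ in (0:ℝ)..h,
        opCos (h - τ) G (m (t₀ + τ) (ψ₀ + τ • ψ'₀ + (τ ^ 2 / 2) • ψ''₀)))
    (hΨstep : ∀ k : ℕ, 1 ≤ k → k ≤ K - 1 →
      Ψ (k + 1) = opCos h G (Ψ k) + Ginv (opSin h G (Ψ' k)) +
        ∫ τ in (0:ℝ)..h,
          Ginv (opSin (h - τ) G (m (t₀ + k * h + τ)
            (Ψ k + τ • Ψ' k + (τ ^ 2 / (2 * h)) • (Ψ' k - Ψ' (k - 1))))))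
    (hΨ'step : ∀ k : ℕ, 1 ≤ k → k ≤ K - 1 →
      Ψ' (k + 1) = -(G (opSin h G (Ψ k))) + opCos h G (Ψ' k) +
        ∫ τ in (0:ℝ)..h,
          opCos (h - τ) G (m (t₀ + k * h + τ)
            (Ψ k + τ • Ψ' k + (τ ^ 2 / (2 * h)) • (Ψ' k - Ψ' (k - 1))))) :
    ∀ k : ℕ, 2 ≤ k → k ≤ K →
      (Ψ k = opCos (k * h) G ψ₀ + Ginv (opSin (k * h) G ψ'₀) +
        (∫ τ in (0:ℝ)..h,
          Ginv (opSin ((k : ℝ) * h - τ) G (m (t₀ + τ) (ψ₀ + τ • ψ'₀ + (τ ^ 2 / 2) • ψ''₀)))) +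
        ∑ l ∈ Finset.Icc 1 (k - 1),
          ∫ τ in (0:ℝ)..h,
            Ginv (opSin (((k : ℝ) - l) * h - τ) G (m (t₀ + l * h + τ)
              (Ψ l + τ • Ψ' l + (τ ^ 2 / (2 * h)) • (Ψ' l - Ψ' (l - 1)))))) ∧
      (Ψ' k = -(G (opSin (k * h) G ψ₀)) + opCos (k * h) G ψ'₀ +
        (∫ τ in (0:ℝ)..h,
          opCos ((k : ℝ) * h - τ) G (m (t₀ + τ) (ψ₀ + τ • ψ'₀ + (τ ^ 2 / 2) • ψ''₀))) +
        ∑ l ∈ Finset.Icc 1 (k - 1),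
          ∫ τ in (0:ℝ)..h,
            opCos (((k : ℝ) - l) * h - τ) G (m (t₀ + l * h + τ)
              (Ψ l + τ • Ψ' l + (τ ^ 2 / (2 * h)) • (Ψ' l - Ψ' (l - 1))))) := by
  intro k hk2 hkK
  have hw : ∀ l : ℕ, Continuous fun τ : ℝ =>
      (if l = 0 then m (t₀ + τ) (ψ₀ + τ • ψ'₀ + (τ ^ 2 / 2) • ψ''₀)
        else m (t₀ + l * h + τ)
          (Ψ l + τ • Ψ' l + (τ ^ 2 / (2 * h)) • (Ψ' l - Ψ' (l - 1)))) := by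
    intro l
    by_cases hl : l = 0
    · simp only [hl, if_pos]
      exact (hm.comp (continuous_const.add continuous_id)).clm_apply
        ((continuous_const.add (continuous_id.smul continuous_const)).add
          (((continuous_pow 2).div_const 2).smul continuous_const))
    · simp only [if_neg hl]
      exact (hm.comp (continuous_const.add continuous_id)).clm_apply
        ((continuous_const.add (continuous_id.smul continuous_const)).add
          (((continuous_pow 2).div_const (2 * h)).smul continuous_const))
  have H := aux_closed_form G Ginv hGr hGl h
      (fun l τ => if l = 0 then m (t₀ + τ) (ψ₀ + τ • ψ'₀ + (τ ^ 2 / 2) • ψ''₀)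
        else m (t₀ + l * h + τ)
          (Ψ l + τ • Ψ' l + (τ ^ 2 / (2 * h)) • (Ψ' l - Ψ' (l - 1))))
      hw ψ₀ ψ'₀ Ψ Ψ' K
      (by simpa only [reduceIte] using hΨ1)
      (by simpa only [reduceIte] using hΨ'1)
      (fun k hk hkK => by
        simpa only [if_neg (by omega : ¬ k = 0)] using hΨstep k hk hkK)
      (fun k hk hkK => by
        simpa only [if_neg (by omega : ¬ k = 0)] using hΨ'step k hk hkK)
  obtain ⟨H1, H2⟩ := H k (by omega) hkK
  constructor
  · rw [H1]
    simp only [reduceIte]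
    congr 1
    refine Finset.sum_congr rfl fun l hl => ?_
    have hl0 : ¬ l = 0 := by have := (Finset.mem_Icc.mp hl).1; omega
    simp only [if_neg hl0]
  · rw [H2]
    simp only [reduceIte]
    congr 1
    refine Finset.sum_congr rfl fun l hl => ?_
    have hl0 : ¬ l = 0 := by have := (Finset.mem_Icc.mp hl).1; omega
    simp only [if_neg hl0]
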